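/- Suppose R is a (92, 3, 91, 30)-relative difference set in G = ℤ_92 × ℤ_3 relative to {0} × ℤ_3, and let s_0, s_1, s_2 count the elements of R with second component 0, 1, 2 respectively. Then s_0^2 + s_1^2 + s_2^2 = 2821. -/

import Mathlib

set_option maxRecDepth 40000


theorem stmt_16 (R : Finset (ZMod 92 × ZMod 3)) (hcard : R.card = 91)
    (hout : ∀ g : ZMod 92 × ZMod 3, g.1 ≠ 0 →
      ((R ×ˢ R).filter (fun q => q.1 - q.2 = g)).card = 30)
    (hin : ∀ g : ZMod 92 × ZMod 3, g.1 = 0 → g ≠ 0 →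
      ((R ×ˢ R).filter (fun q => q.1 - q.2 = g)).card = 0) :
    (R.filter (fun x => x.2 = 0)).card ^ 2 + (R.filter (fun x => x.2 = 1)).card ^ 2 +
      (R.filter (fun x => x.2 = 2)).card ^ 2 = 2821 := by
  classical
  set T := (R ×ˢ R).filter (fun q => q.1.2 = q.2.2) with hT
  -- T.card = sum of squares
  have hA : T.card = ∑ i : ZMod 3, ((R.filter (fun x => x.2 = i)).card) ^ 2 := by
    rw [Finset.card_eq_sum_card_fiberwise
      (f := fun q : (ZMod 92 × ZMod 3) × (ZMod 92 × ZMod 3) => q.1.2)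
      (t := Finset.univ) (fun x _ => Finset.mem_univ _)]
    refine Finset.sum_congr rfl fun i _ => ?_
    have he : T.filter (fun q => q.1.2 = i)
        = (R.filter (fun x => x.2 = i)) ×ˢ (R.filter (fun x => x.2 = i)) := by
      rw [← Finset.filter_product, hT, Finset.filter_filter]
      apply Finset.filter_congr
      intro q _
      constructor
      · rintro ⟨h1, h2⟩; exact ⟨h2, h1 ▸ h2⟩
      · rintro ⟨h1, h2⟩; exact ⟨h1.trans h2.symm, h1⟩
    rw [he, Finset.card_product, sq]
  -- T.card = 2821
  have hdiag : ((R ×ˢ R).filter (fun q => q.1 - q.2 = (0 : ZMod 92 × ZMod 3))).card = 91 := by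
    have he : (R ×ˢ R).filter (fun q => q.1 - q.2 = (0 : ZMod 92 × ZMod 3)) = R.diag := by
      ext q
      rw [Finset.mem_filter, Finset.mem_diag, Finset.mem_product, sub_eq_zero]
      constructor
      · rintro ⟨⟨h1, _⟩, h⟩; exact ⟨h1, h⟩
      · rintro ⟨h1, h⟩; exact ⟨⟨h1, h ▸ h1⟩, h⟩
    rw [he, Finset.diag_card, hcard]
  have hS0 : ((Finset.univ : Finset (ZMod 92 × ZMod 3)).filter (fun g => g.2 = 0)).card = 92 := by
    have : (Finset.univ : Finset (ZMod 92 × ZMod 3)).filter (fun g => g.2 = 0)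
        = Finset.univ ×ˢ {(0 : ZMod 3)} := by
      ext g
      simp only [Finset.mem_filter, Finset.mem_univ, true_and, Finset.mem_product,
        Finset.mem_singleton]
    rw [this, Finset.card_product, Finset.card_singleton, Finset.card_univ, ZMod.card]
  have hB : T.card = 2821 := by
    rw [Finset.card_eq_sum_card_fiberwise
      (f := fun q : (ZMod 92 × ZMod 3) × (ZMod 92 × ZMod 3) => q.1 - q.2)
      (t := Finset.univ.filter (fun g => g.2 = 0)) ?_]
    · have hfib : ∀ g ∈ (Finset.univ : Finset (ZMod 92 × ZMod 3)).filter (fun g => g.2 = 0),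
          (T.filter (fun q => q.1 - q.2 = g)).card
            = ((R ×ˢ R).filter (fun q => q.1 - q.2 = g)).card := by
        intro g hg
        rw [Finset.mem_filter] at hg
        congr 1
        rw [hT, Finset.filter_filter]
        apply Finset.filter_congr
        intro q _
        constructor
        · rintro ⟨_, h2⟩; exact h2
        · intro h
          refine ⟨?_, h⟩
          have : (q.1 - q.2).2 = 0 := by rw [h, hg.2]
          have : q.1.2 - q.2.2 = 0 := this
          rwa [sub_eq_zero] at this
      rw [Finset.sum_congr rfl hfib]
      have hmem : (0 : ZMod 92 × ZMod 3) ∈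
          (Finset.univ : Finset (ZMod 92 × ZMod 3)).filter (fun g => g.2 = 0) := by simp
      rw [← Finset.sum_erase_add _ _ hmem, hdiag]
      have h30 : ∀ g ∈ ((Finset.univ : Finset (ZMod 92 × ZMod 3)).filter
          (fun g => g.2 = 0)).erase 0,
          ((R ×ˢ R).filter (fun q => q.1 - q.2 = g)).card = 30 := by
        intro g hg
        rw [Finset.mem_erase, Finset.mem_filter] at hg
        apply hout
        intro h1
        exact hg.1 (Prod.ext h1 hg.2.2)
      rw [Finset.sum_congr rfl h30, Finset.sum_const, Finset.card_erase_of_mem hmem, hS0]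
      norm_num
    · intro q hq
      rw [hT, Finset.mem_coe, Finset.mem_filter] at hq
      rw [Finset.mem_coe, Finset.mem_filter]
      refine ⟨Finset.mem_univ _, ?_⟩
      show q.1.2 - q.2.2 = 0
      rw [hq.2, sub_self]
  have hsum : ∑ i : ZMod 3, ((R.filter (fun x => x.2 = i)).card) ^ 2
      = (R.filter (fun x => x.2 = 0)).card ^ 2 + (R.filter (fun x => x.2 = 1)).card ^ 2 +
        (R.filter (fun x => x.2 = 2)).card ^ 2 := by
    rw [show (Finset.univ : Finset (ZMod 3)) = {0, 1, 2} by decide,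
      Finset.sum_insert (by decide), Finset.sum_insert (by decide), Finset.sum_singleton,
      add_assoc]
  rw [← hsum, ← hA, hB]
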